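/- Fix integers a, b, c ≥ 1 with gcd(a,b) = 1 and α ∈ {1, −1}. Let θ, θ' ∈ ℤ satisfy θθ' ≡ 1 (mod 2abc²) and gcd(2b, θ'ac − θα) = 1, and set μ = θ'ac − θα. Then gcd(μ, 2abc²) = 1 and the set D_a^{μ,α}(1) is nonempty, hence infinite. -/
import Mathlib


/-- The a-series set `𝒟(r,s;a)^{μ̄}_α(q)` of the paper (with `r = ac`, `s = bc`):
positive integers `d` with `d ≡ μ² (mod 4abc²)` such that there is `p ∈ ℤ` with
`p² − dq² = 4αac`, `2ac ∣ p − μq`, `gcd(a,p,q) = 1`, and `2acl ∤ p − μq` for every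
prime `l` with `l² ∣ b`. -/
def DSet (a b c μ α q : ℤ) : Set ℤ :=
  {d : ℤ | 0 < d ∧ (4 * a * b * c ^ 2) ∣ (d - μ ^ 2) ∧
    ∃ p : ℤ, p ^ 2 - d * q ^ 2 = 4 * α * a * c ∧
      (2 * a * c) ∣ (p - μ * q) ∧
      Int.gcd a (Int.gcd p q) = 1 ∧
      ∀ l : ℤ, Prime l → l ^ 2 ∣ b → ¬ (2 * a * c * l) ∣ (p - μ * q)}

/-- The a-series set `𝒟(r,s;a)^{μ̄}_α = ⋃_{q ≥ 1} 𝒟(r,s;a)^{μ̄}_α(q)`. -/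
def DSetU (a b c μ α : ℤ) : Set ℤ :=
  ⋃ q ∈ {q : ℤ | 1 ≤ q}, DSet a b c μ α q

set_option maxHeartbeats 1600000 in
/-- first part of Theorem 4.5.  Fix `a, b, c ≥ 1` with `gcd(a,b) = 1`
and `α = ±1`.  Let `θ, θ'` satisfy `θθ' ≡ 1 (mod 2abc²)` and `gcd(2b, θ'ac − θα) = 1`,
and set `μ = θ'ac − θα`.  Then `gcd(μ, 2abc²) = 1` and `𝒟(r,s;a)^{μ̄}_α(1)` is nonempty,
hence infinite. -/
theorem dSet_one_nonempty_of_theta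
    (a b c : ℤ) (ha : 1 ≤ a) (hb : 1 ≤ b) (hc : 1 ≤ c)
    (hab : Int.gcd a b = 1)
    (α : ℤ) (hα : α = 1 ∨ α = -1)
    (θ θ' : ℤ) (hθ : (2 * a * b * c ^ 2) ∣ (θ * θ' - 1))
    (hgcd : Int.gcd (2 * b) (θ' * a * c - θ * α) = 1)
    (μ : ℤ) (hμdef : μ = θ' * a * c - θ * α) :
    Int.gcd μ (2 * a * b * c ^ 2) = 1 ∧
    (DSet a b c μ α 1).Nonempty ∧ (DSet a b c μ α 1).Infinite := by
  obtain ⟨m, hm⟩ := hθ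
  have hα2 : α ^ 2 = 1 := by rcases hα with h | h <;> simp [h]
  have hac : (1:ℤ) ≤ a * c := by nlinarith
  -- coprimality of μ with 2abc²
  have hcop2b : IsCoprime μ (2 * b) := by
    rw [hμdef]
    exact (Int.isCoprime_iff_gcd_eq_one.mpr hgcd).symm
  have hcopac : IsCoprime μ (a * c) := by
    refine ⟨-α * θ * θ' ^ 2, α * θ * θ' ^ 3 - 2 * b * c * m * (θ * θ' + 1), ?_⟩
    subst hμdef
    linear_combination (θ ^ 2 * θ' ^ 2) * hα2 + (θ * θ' + 1) * hm
  have hcopa : IsCoprime μ a := hcopac.of_mul_right_left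
  have hcopc : IsCoprime μ c := hcopac.of_mul_right_right
  have hcopfull : IsCoprime μ (2 * a * b * c ^ 2) := by
    have : IsCoprime μ ((2 * b) * (a * (c * c))) :=
      hcop2b.mul_right (hcopa.mul_right (hcopc.mul_right hcopc))
    have e : (2 * b) * (a * (c * c)) = 2 * a * b * c ^ 2 := by ring
    rwa [e] at this
  refine ⟨Int.isCoprime_iff_gcd_eq_one.mp hcopfull, ?_⟩
  -- the family of elements
  obtain ⟨A, hA⟩ : ∃ A : ℤ, A = μ + 2 * a * c * (-(θ * θ' ^ 2)) := ⟨_, rfl⟩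
  obtain ⟨B, hB⟩ : ∃ B : ℤ, B = 2 * a * b * c ^ 2 := ⟨_, rfl⟩
  have hB2 : (2:ℤ) ≤ B := by
    have h1 : (1:ℤ) ≤ c ^ 2 := by nlinarith
    have h2 : (1:ℤ) ≤ b * c ^ 2 := by nlinarith
    have h3 : (1:ℤ) ≤ a * (b * c ^ 2) := by nlinarith
    rw [hB]; nlinarith
  have hmem : ∀ k : ℤ, 2 * a * c < A + B * k →
      (A + B * k) ^ 2 - 4 * α * a * c ∈ DSet a b c μ α 1 := by
    intro k hk
    obtain ⟨t, ht⟩ : ∃ t : ℤ, t = -(θ * θ' ^ 2) + b * c * k := ⟨_, rfl⟩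
    have hPt : A + B * k = μ + 2 * a * c * t := by rw [hA, hB, ht]; ring
    have hW : a * c * t ^ 2 + μ * t - α =
        b * c * (2 * a * c * m * (a * c * θ * θ' ^ 3 + α * (θ * θ' + 1))
          + 2 * a * c * (-(θ * θ' ^ 2)) * k + a * b * c ^ 2 * k ^ 2 + μ * k) := by
      rw [ht]; subst hμdef
      linear_combination (a * c * θ * θ' ^ 3 + α * (θ * θ' + 1)) * hm
    refine ⟨?_, ?_, A + B * k, by ring, ?_, by simp, ?_⟩
    · -- positivity
      have h1 : 4 * α * a * c ≤ 4 * (a * c) := by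
        rcases hα with h | h <;> rw [h] <;> nlinarith
      nlinarith [hk, hac]
    · -- congruence
      refine ⟨2 * a * c * m * (a * c * θ * θ' ^ 3 + α * (θ * θ' + 1))
          + 2 * a * c * (-(θ * θ' ^ 2)) * k + a * b * c ^ 2 * k ^ 2 + μ * k, ?_⟩
      have e : (A + B * k) ^ 2 - 4 * α * a * c - μ ^ 2
          = 4 * a * c * (a * c * t ^ 2 + μ * t - α) := by rw [hPt]; ring
      rw [e, hW]; ring
    · -- divisibility by 2ac
      exact ⟨t, by rw [hPt]; ring⟩
    · -- condition at primes l with l² ∣ b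
      intro l hl hlb hdvd
      have hlt : l ∣ t := by
        have h2ac : (2 * (a * c) : ℤ) ≠ 0 := by positivity
        have hd2 : 2 * (a * c) * l ∣ 2 * (a * c) * t := by
          refine dvd_trans (dvd_of_eq (by ring)) (hdvd.trans (dvd_of_eq ?_))
          rw [hPt]; ring
        exact (mul_dvd_mul_iff_left h2ac).mp hd2
      have hlbdvd : l ∣ b := dvd_trans (dvd_mul_left l l |>.trans (dvd_of_eq (sq l).symm)) hlb
      have hlα : l ∣ α := by
        have h1 : l ∣ a * c * t ^ 2 + μ * t :=
          hlt.trans ⟨a * c * t + μ, by ring⟩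
        have h2 : l ∣ a * c * t ^ 2 + μ * t - α := by
          rw [hW]
          exact Dvd.dvd.mul_right (hlbdvd.mul_right c) _
        have := h1.sub h2
        simpa using this
      have hunit : IsUnit l := by
        rcases hα with h | h <;> rw [h] at hlα
        · exact isUnit_of_dvd_one hlα
        · exact isUnit_of_dvd_one (dvd_neg.mp hlα)
      exact hl.not_unit hunit
  -- choose k₀
  obtain ⟨k₀, hk₀⟩ : ∃ k₀ : ℤ, k₀ = |A| + 2 * a * c + 1 := ⟨_, rfl⟩
  have hbig : ∀ n : ℕ, 2 * a * c < A + B * (k₀ + n) := by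
    intro n
    have h1 : (0:ℤ) ≤ (n : ℤ) := Int.natCast_nonneg n
    have h4 : -|A| ≤ A := neg_abs_le A
    have h0 : (0:ℤ) ≤ |A| := abs_nonneg A
    have h2 : 0 ≤ k₀ + n := by rw [hk₀]; linarith
    have h3 : k₀ + (n:ℤ) ≤ B * (k₀ + n) := le_mul_of_one_le_left h2 (by linarith)
    linarith
  refine ⟨⟨(A + B * (k₀ + (0:ℕ))) ^ 2 - 4 * α * a * c, hmem _ (hbig 0)⟩, ?_⟩
  have hsm : StrictMono fun n : ℕ => (A + B * (k₀ + n)) ^ 2 - 4 * α * a * c := by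
    intro n n' hnn'
    have h1 : 0 < A + B * (k₀ + n) := by have := hbig n; linarith
    have h2 : A + B * (k₀ + n) < A + B * (k₀ + n') := by
      have h5 : (n:ℤ) < (n':ℤ) := by exact_mod_cast hnn'
      have h6 : B * (n:ℤ) < B * (n':ℤ) :=
        mul_lt_mul_of_pos_left h5 (by linarith)
      have e1 : A + B * (k₀ + n) = A + B * k₀ + B * (n:ℤ) := by ring
      have e2 : A + B * (k₀ + n') = A + B * k₀ + B * (n':ℤ) := by ring
      rw [e1, e2]; linarith
    have h3 : (A + B * (k₀ + n)) ^ 2 < (A + B * (k₀ + n')) ^ 2 := by nlinarith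
    simpa using h3
  exact Set.infinite_of_injective_forall_mem hsm.injective (fun n => hmem _ (hbig n))
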